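/- Let δ > 0, d = 1/δ − 1, and let W denote the Lambert W function (the inverse of w ↦ w·e^w on [0,∞)). Then y(t) = 1/(W(d·e^(d−t)) + 1) satisfies y'(t) = y(t)² − y(t)³ for all t ∈ ℝ, with y(0) = δ. -/

import Mathlib

theorem stmt_10 (δ : ℝ) (hδ : 0 < δ) (hδ1 : δ < 1)
    (d : ℝ) (hd : d = 1 / δ - 1)
    (W : ℝ → ℝ)
    (hW_inv : ∀ w : ℝ, 0 ≤ w → W (w * Real.exp w) = w)
    (hW_pos : ∀ z : ℝ, 0 < z → 0 < W z)
    (hW_deriv : ∀ z : ℝ, 0 < z → HasDerivAt W (W z / (z * (1 + W z))) z)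
    (y : ℝ → ℝ) (hy : ∀ t, y t = 1 / (W (d * Real.exp (d - t)) + 1)) :
    y 0 = δ ∧ ∀ t : ℝ, HasDerivAt y ((y t) ^ 2 - (y t) ^ 3) t := by
  have hd0 : 0 < d := by
    rw [hd]
    have : 1 < 1 / δ := one_lt_one_div hδ hδ1
    linarith
  constructor
  · rw [hy 0]
    have h0 : d - (0:ℝ) = d := by ring
    rw [h0, hW_inv d hd0.le]
    rw [hd]
    field_simp
    ring
  · intro t
    set z : ℝ := d * Real.exp (d - t) with hzdef
    have hz : 0 < z := mul_pos hd0 (Real.exp_pos _)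
    have hWz : 0 < W z := hW_pos z hz
    have hWz1 : W z + 1 ≠ 0 := by positivity
    -- derivative of t ↦ d * exp (d - t)
    have hzt : HasDerivAt (fun s => d * Real.exp (d - s)) (-z) t := by
      have h1 : HasDerivAt (fun s : ℝ => d - s) (-1) t := by
        simpa using (hasDerivAt_id t).const_sub d
      have h2 : HasDerivAt (fun s => Real.exp (d - s)) (Real.exp (d - t) * (-1)) t :=
        (Real.hasDerivAt_exp (d - t)).comp t h1
      have := h2.const_mul d
      refine this.congr_deriv ?_
      show d * (Real.exp (d - t) * -1) = -(d * Real.exp (d - t))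
      ring
    have hWc : HasDerivAt (fun s => W (d * Real.exp (d - s)))
        (-(W z / (1 + W z))) t := by
      have := (hW_deriv z hz).comp t hzt
      refine this.congr_deriv ?_
      rw [mul_neg, div_mul_eq_mul_div, mul_comm z (1 + W z), mul_div_mul_right _ _ hz.ne']
    have hg : HasDerivAt (fun s => W (d * Real.exp (d - s)) + 1)
        (-(W z / (1 + W z))) t := hWc.add_const 1
    have hy' : HasDerivAt (fun s => (W (d * Real.exp (d - s)) + 1)⁻¹)
        (-(-(W z / (1 + W z))) / (W z + 1) ^ 2) t := hg.inv hWz1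
    have heq : (fun s => (W (d * Real.exp (d - s)) + 1)⁻¹) = y := by
      funext s; rw [hy s, one_div]
    rw [heq] at hy'
    convert hy' using 1
    rw [hy t, ← hzdef]
    have h1a : 1 + W z ≠ 0 := by positivity
    field_simp
    ring
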